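/- arXiv:1911.05256 — 5 statements merged into one kernel-verified Lean document; each statement's English description precedes it below -/
import Mathlib

section
/- Let G be a simple graph, let v be a vertex, let {i,j} be an edge of G, and let m be a natural number. Then the edge {i,j} is traversed by some closed walk of G that starts and ends at v and has length at most m if and only if i is reachable from v and d(v,i) + d(v,j) + 1 ≤ m, where d denotes graph distance. -/
private lemma dist_aux {V : Type*} {G : SimpleGraph V} {i j : V} :
    ∀ {u w : V} (p : G.Walk u w), s(i, j) ∈ p.edges →
      G.dist u i + G.dist j w + 1 ≤ p.length ∨ G.dist u j + G.dist i w + 1 ≤ p.length := by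
  classical
  intro u w p
  induction p with
  | nil => simp
  | @cons u b w h q ih =>
    intro he
    rw [SimpleGraph.Walk.edges_cons, List.mem_cons] at he
    rcases he with he | he
    · rw [Sym2.eq_iff] at he
      rcases he with ⟨rfl, rfl⟩ | ⟨rfl, rfl⟩
      · left
        have := SimpleGraph.dist_le q
        simp [SimpleGraph.dist_self]
        omega
      · right
        have := SimpleGraph.dist_le q
        simp [SimpleGraph.dist_self]
        omega
    · have hbi : G.Reachable b i := ⟨(q.takeUntil i (q.fst_mem_support_of_mem_edges he)).copy rfl rfl⟩
      have hbj : G.Reachable b j := ⟨(q.takeUntil j (q.snd_mem_support_of_mem_edges he)).copy rfl rfl⟩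
      rcases ih he with h1 | h1
      · left
        obtain ⟨r, hr⟩ := hbi.exists_walk_length_eq_dist
        have : G.dist u i ≤ G.dist b i + 1 := by
          have := SimpleGraph.dist_le (SimpleGraph.Walk.cons h r)
          simpa [hr] using this
        simp only [SimpleGraph.Walk.length_cons]
        omega
      · right
        obtain ⟨r, hr⟩ := hbj.exists_walk_length_eq_dist
        have : G.dist u j ≤ G.dist b j + 1 := by
          have := SimpleGraph.dist_le (SimpleGraph.Walk.cons h r)
          simpa [hr] using this
        simp only [SimpleGraph.Walk.length_cons]
        omega

/-- An edge `{i, j}` of `G` is traversed by some closed walk at `v` of length at most `m`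
if and only if `i` is reachable from `v` and `d(v, i) + d(v, j) + 1 ≤ m`. -/
theorem edge_mem_closed_walk_iff
    {V : Type*} (G : SimpleGraph V) (v i j : V) (m : ℕ) (hij : G.Adj i j) :
    (∃ p : G.Walk v v, p.length ≤ m ∧ s(i, j) ∈ p.edges) ↔
      G.Reachable v i ∧ G.dist v i + G.dist v j + 1 ≤ m := by
  classical
  constructor
  · rintro ⟨p, hlen, he⟩
    have hri : G.Reachable v i := ⟨p.takeUntil i (p.fst_mem_support_of_mem_edges he)⟩
    refine ⟨hri, ?_⟩
    have c1 : G.dist j v = G.dist v j := SimpleGraph.dist_comm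
    have c2 : G.dist i v = G.dist v i := SimpleGraph.dist_comm
    rcases dist_aux p he with h1 | h1 <;> omega
  · rintro ⟨hri, hm⟩
    have hrj : G.Reachable j v := (hri.trans ⟨hij.toWalk⟩).symm
    obtain ⟨p, hp⟩ := hri.exists_walk_length_eq_dist
    obtain ⟨q, hq⟩ := hrj.exists_walk_length_eq_dist
    refine ⟨p.append (SimpleGraph.Walk.cons hij q), ?_, ?_⟩
    · rw [SimpleGraph.Walk.length_append, SimpleGraph.Walk.length_cons, hp, hq,
        SimpleGraph.dist_comm (u := j)]
      omega
    · rw [SimpleGraph.Walk.edges_append, List.mem_append]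
      right
      simp
end

section
/- Let G be a simple graph, v a vertex, and k a positive integer. Then the subgraph L_k(v) formed by all vertices and edges appearing in closed walks at v of length at most 2k+1 is exactly the induced subgraph of G on the k-hop neighbourhood of v: its vertex set is {u : u reachable from v and d(v,u) ≤ k}, and its edge set consists of all edges of G both of whose endpoints lie in that vertex set. -/
/-- The subgraph of `G` formed by all vertices and edges appearing in some closed walk
at `v` of length at most `m`. -/
def walkSubgraph {V : Type*} (G : SimpleGraph V) (v : V) (m : ℕ) : G.Subgraph where
  verts := {u | ∃ p : G.Walk v v, p.length ≤ m ∧ u ∈ p.support}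
  Adj i j := ∃ p : G.Walk v v, p.length ≤ m ∧ s(i, j) ∈ p.edges
  adj_sub := fun ⟨p, _, he⟩ => p.adj_of_mem_edges he
  edge_vert := fun ⟨p, hl, he⟩ => ⟨p, hl, p.fst_mem_support_of_mem_edges he⟩
  symm := ⟨fun i j ⟨p, hl, he⟩ => ⟨p, hl, by rwa [Sym2.eq_swap] at he⟩⟩

/-- For `k ≥ 1`, the subgraph `L_k(v)` formed by all vertices and edges in closed walks
at `v` of length at most `2k + 1` is exactly the induced subgraph of `G` on the `k`-hop
neighbourhood of `v`: its vertex set is the set of vertices reachable from `v` at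
distance at most `k`, and its edges are the edges of `G` with both endpoints in this
vertex set. -/
theorem walkSubgraph_L_eq_induced_k_hop
    {V : Type*} (G : SimpleGraph V) (v : V) (k : ℕ) (hk : 1 ≤ k) :
    (walkSubgraph G v (2 * k + 1)).verts =
        {u | G.Reachable v u ∧ G.dist v u ≤ k} ∧
      ∀ i j, (walkSubgraph G v (2 * k + 1)).Adj i j ↔
        G.Adj i j ∧ (G.Reachable v i ∧ G.dist v i ≤ k) ∧
          (G.Reachable v j ∧ G.dist v j ≤ k) := by
  classical
  have key : ∀ u, (∃ p : G.Walk v v, p.length ≤ 2 * k + 1 ∧ u ∈ p.support) ↔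
      (G.Reachable v u ∧ G.dist v u ≤ k) := by
    intro u
    constructor
    · rintro ⟨p, hl, hu⟩
      have h1 : G.Reachable v u := ⟨p.takeUntil u hu⟩
      refine ⟨h1, ?_⟩
      have h2 : G.dist v u ≤ (p.takeUntil u hu).length := SimpleGraph.dist_le _
      have h3 : G.dist u v ≤ (p.dropUntil u hu).length := SimpleGraph.dist_le _
      have h5 : (p.takeUntil u hu).length + (p.dropUntil u hu).length = p.length := by
        rw [← SimpleGraph.Walk.length_append, p.take_spec hu]
      have hc : G.dist u v = G.dist v u := SimpleGraph.dist_comm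
      omega
    · rintro ⟨hr, hd⟩
      obtain ⟨p, hp⟩ := hr.exists_walk_length_eq_dist
      refine ⟨p.append p.reverse, ?_, ?_⟩
      · simp only [SimpleGraph.Walk.length_append, SimpleGraph.Walk.length_reverse, hp]
        omega
      · simp
  constructor
  · ext u
    simpa only [walkSubgraph, Set.mem_setOf_eq] using key u
  · intro i j
    constructor
    · rintro ⟨p, hl, he⟩
      refine ⟨p.adj_of_mem_edges he, (key i).mp ⟨p, hl, p.fst_mem_support_of_mem_edges he⟩,
        (key j).mp ⟨p, hl, p.snd_mem_support_of_mem_edges he⟩⟩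
    · rintro ⟨hadj, ⟨hri, hdi⟩, ⟨hrj, hdj⟩⟩
      obtain ⟨p, hp⟩ := hri.exists_walk_length_eq_dist
      obtain ⟨q, hq⟩ := hrj.exists_walk_length_eq_dist
      refine ⟨p.append (SimpleGraph.Walk.cons hadj q.reverse), ?_, ?_⟩
      · simp only [SimpleGraph.Walk.length_append, SimpleGraph.Walk.length_cons,
          SimpleGraph.Walk.length_reverse, hp, hq]
        omega
      · simp
end

section
/- Let G be a simple graph, v a vertex, and k a positive integer. Then the subgraph D_k(v) formed by all vertices and edges appearing in closed walks at v of length at most 2k has the same vertex set as L_k(v) (namely the vertices at distance at most k from v), and its edge set is the edge set of L_k(v) minus exactly those edges {i,j} with d(v,i) = d(v,j) = k. -/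
open SimpleGraph

private lemma edge_split {V : Type*} {G : SimpleGraph V} {a b i j : V} (p : G.Walk a b)
    (h : s(i, j) ∈ p.edges) :
    (∃ q : G.Walk a i, ∃ r : G.Walk j b, q.length + 1 + r.length ≤ p.length) ∨
    (∃ q : G.Walk a j, ∃ r : G.Walk i b, q.length + 1 + r.length ≤ p.length) := by
  induction p with
  | nil => simp at h
  | @cons a c b hac q ih =>
    rw [SimpleGraph.Walk.edges_cons, List.mem_cons] at h
    rcases h with h | h
    · rw [Sym2.eq_iff] at h
      rcases h with ⟨rfl, rfl⟩ | ⟨rfl, rfl⟩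
      · exact Or.inl ⟨SimpleGraph.Walk.nil, q, by simp; omega⟩
      · exact Or.inr ⟨SimpleGraph.Walk.nil, q, by simp; omega⟩
    · rcases ih h with ⟨q', r', hlen⟩ | ⟨q', r', hlen⟩
      · exact Or.inl ⟨SimpleGraph.Walk.cons hac q', r', by simp only [SimpleGraph.Walk.length_cons]; omega⟩
      · exact Or.inr ⟨SimpleGraph.Walk.cons hac q', r', by simp only [SimpleGraph.Walk.length_cons]; omega⟩

private lemma mem_verts_iff {V : Type*} (G : SimpleGraph V) (v u : V) (m : ℕ) :
    u ∈ (walkSubgraph G v m).verts ↔ G.Reachable v u ∧ 2 * G.dist v u ≤ m := by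
  classical
  constructor
  · rintro ⟨p, hl, hu⟩
    have hq := SimpleGraph.dist_le (p.takeUntil u hu)
    have hr := SimpleGraph.dist_le (p.dropUntil u hu)
    have hsum : (p.takeUntil u hu).length + (p.dropUntil u hu).length = p.length := by
      rw [← SimpleGraph.Walk.length_append, p.take_spec hu]
    refine ⟨⟨p.takeUntil u hu⟩, ?_⟩
    rw [SimpleGraph.dist_comm] at hr
    omega
  · rintro ⟨hreach, hd⟩
    obtain ⟨p, hp⟩ := hreach.exists_walk_length_eq_dist
    refine ⟨p.append p.reverse, ?_, ?_⟩
    · rw [SimpleGraph.Walk.length_append, SimpleGraph.Walk.length_reverse]; omega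
    · rw [SimpleGraph.Walk.mem_support_append_iff]
      exact Or.inl p.end_mem_support

private lemma adj_iff {V : Type*} (G : SimpleGraph V) (v i j : V) (m : ℕ) :
    (walkSubgraph G v m).Adj i j ↔
      G.Adj i j ∧ G.Reachable v i ∧ G.dist v i + G.dist v j + 1 ≤ m := by
  classical
  constructor
  · rintro ⟨p, hl, he⟩
    refine ⟨p.adj_of_mem_edges he, ⟨p.takeUntil i (p.fst_mem_support_of_mem_edges he)⟩, ?_⟩
    rcases edge_split p he with ⟨q, r, hlen⟩ | ⟨q, r, hlen⟩
    · have h1 := SimpleGraph.dist_le q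
      have h2 := SimpleGraph.dist_le r
      rw [SimpleGraph.dist_comm] at h2
      omega
    · have h1 := SimpleGraph.dist_le q
      have h2 := SimpleGraph.dist_le r
      rw [SimpleGraph.dist_comm] at h2
      omega
  · rintro ⟨hadj, hreach, hd⟩
    obtain ⟨p, hp⟩ := hreach.exists_walk_length_eq_dist
    obtain ⟨q, hq⟩ := (hreach.trans ⟨hadj.toWalk⟩).exists_walk_length_eq_dist
    refine ⟨p.append (SimpleGraph.Walk.cons hadj q.reverse), ?_, ?_⟩
    · rw [SimpleGraph.Walk.length_append, SimpleGraph.Walk.length_cons,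
        SimpleGraph.Walk.length_reverse]
      omega
    · simp [SimpleGraph.Walk.edges_append, SimpleGraph.Walk.edges_cons]

/-- For `k ≥ 1`, the subgraph `D_k(v)` (from closed walks at `v` of length at most `2k`)
has the same vertex set as `L_k(v)` (from closed walks of length at most `2k + 1`),
namely the vertices at distance at most `k` from `v`, and its edges are exactly the
edges of `L_k(v)` except those `{i, j}` with `d(v, i) = d(v, j) = k`. -/
theorem walkSubgraph_D_eq_L_minus_outer_edges
    {V : Type*} (G : SimpleGraph V) (v : V) (k : ℕ) (hk : 1 ≤ k) :
    (walkSubgraph G v (2 * k)).verts = (walkSubgraph G v (2 * k + 1)).verts ∧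
      (walkSubgraph G v (2 * k)).verts = {u | G.Reachable v u ∧ G.dist v u ≤ k} ∧
      ∀ i j, (walkSubgraph G v (2 * k)).Adj i j ↔
        (walkSubgraph G v (2 * k + 1)).Adj i j ∧
          ¬(G.dist v i = k ∧ G.dist v j = k) := by
  refine ⟨?_, ?_, ?_⟩
  · ext u
    rw [mem_verts_iff, mem_verts_iff]
    constructor <;> rintro ⟨h1, h2⟩ <;> exact ⟨h1, by omega⟩
  · ext u
    rw [mem_verts_iff]
    constructor <;> rintro ⟨h1, h2⟩ <;> exact ⟨h1, by omega⟩
  · intro i j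
    rw [adj_iff, adj_iff]
    constructor
    · rintro ⟨hadj, hreach, hd⟩
      exact ⟨⟨hadj, hreach, by omega⟩, by omega⟩
    · rintro ⟨⟨hadj, hreach, hd⟩, hne⟩
      refine ⟨hadj, hreach, ?_⟩
      have h1 : G.dist v j ≤ G.dist v i + 1 := by
        obtain ⟨p, hp⟩ := hreach.exists_walk_length_eq_dist
        have := SimpleGraph.dist_le (p.append hadj.toWalk)
        rw [SimpleGraph.Walk.length_append] at this
        simp at this
        omega
      have h2 : G.dist v i ≤ G.dist v j + 1 := by
        obtain ⟨q, hq⟩ := (hreach.trans ⟨hadj.toWalk⟩).exists_walk_length_eq_dist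
        have := SimpleGraph.dist_le (q.append hadj.symm.toWalk)
        rw [SimpleGraph.Walk.length_append] at this
        simp at this
        omega
      omega
end

section
/- Let G be a simple graph, v a vertex, and k a positive integer. Let H be a subgraph of G that is distance-determined from v, meaning there exist a set S ⊆ ℕ and a symmetric predicate P on ℕ × ℕ such that a vertex u of G belongs to H iff u is reachable from v and d(v,u) ∈ S, and an edge {i,j} of G belongs to H iff P(d(v,i), d(v,j)) holds. If H contains D_k(v) and is contained in L_k(v) (as subgraphs), then H = D_k(v) or H = L_k(v). -/
/-- `H` is distance-determined from `v`: there are a set `S ⊆ ℕ` and a symmetric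
predicate `P` on `ℕ × ℕ` such that a vertex `u` belongs to `H` iff `u` is reachable
from `v` and `d(v, u) ∈ S`, and an edge `{i, j}` of `G` belongs to `H` iff
`P (d(v, i)) (d(v, j))` holds. -/
def DistanceDetermined {V : Type*} {G : SimpleGraph V} (H : G.Subgraph) (v : V) : Prop :=
  ∃ (S : Set ℕ) (P : ℕ → ℕ → Prop), (∀ a b, P a b ↔ P b a) ∧
    (∀ u, u ∈ H.verts ↔ G.Reachable v u ∧ G.dist v u ∈ S) ∧
    (∀ i j, G.Adj i j → (H.Adj i j ↔ P (G.dist v i) (G.dist v j)))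

open SimpleGraph

private lemma edge_dist_bound {V : Type*} {G : SimpleGraph V} {u w i j : V}
    (p : G.Walk u w) (he : s(i, j) ∈ p.edges) :
    G.dist u i + 1 + G.dist j w ≤ p.length ∨ G.dist u j + 1 + G.dist i w ≤ p.length := by
  classical
  induction p with
  | nil => simp at he
  | @cons a c w h q ih =>
    rw [Walk.edges_cons, List.mem_cons] at he
    rcases he with he | he
    · rw [Sym2.eq_iff] at he
      rcases he with ⟨rfl, rfl⟩ | ⟨rfl, rfl⟩
      · left
        simp only [SimpleGraph.dist_self, Walk.length_cons]
        have := G.dist_le q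
        omega
      · right
        simp only [SimpleGraph.dist_self, Walk.length_cons]
        have := G.dist_le q
        omega
    · have hi : G.Reachable c i := ⟨q.takeUntil i (q.fst_mem_support_of_mem_edges he)⟩
      have hj : G.Reachable c j := ⟨q.takeUntil j (q.snd_mem_support_of_mem_edges he)⟩
      have hai : G.dist a i ≤ G.dist c i + 1 := by
        obtain ⟨r, hr⟩ := hi.exists_walk_length_eq_dist
        have := G.dist_le (Walk.cons h r)
        simpa [hr] using this
      have haj : G.dist a j ≤ G.dist c j + 1 := by
        obtain ⟨r, hr⟩ := hj.exists_walk_length_eq_dist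
        have := G.dist_le (Walk.cons h r)
        simpa [hr] using this
      rcases ih he with h1 | h1
      · left; rw [Walk.length_cons]; omega
      · right; rw [Walk.length_cons]; omega

private lemma mem_walkSubgraph_verts {V : Type*} {G : SimpleGraph V} {v u : V} {m : ℕ} :
    u ∈ (walkSubgraph G v m).verts ↔ G.Reachable v u ∧ 2 * G.dist v u ≤ m := by
  classical
  constructor
  · rintro ⟨p, hl, hs⟩
    have hr : G.Reachable v u := ⟨p.takeUntil u hs⟩
    refine ⟨hr, ?_⟩
    have hspec := p.take_spec hs
    have hlen : (p.takeUntil u hs).length + (p.dropUntil u hs).length = p.length := by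
      rw [← Walk.length_append, hspec]
    have h1 : G.dist v u ≤ (p.takeUntil u hs).length := G.dist_le _
    have h2 : G.dist u v ≤ (p.dropUntil u hs).length := G.dist_le _
    have hc : G.dist v u = G.dist u v := G.dist_comm
    omega
  · rintro ⟨hr, hle⟩
    obtain ⟨r, hrl⟩ := hr.exists_walk_length_eq_dist
    refine ⟨r.append r.reverse, ?_, ?_⟩
    · rw [Walk.length_append, Walk.length_reverse, hrl]; omega
    · rw [Walk.mem_support_append_iff]; left; exact r.end_mem_support

private lemma walkSubgraph_adj {V : Type*} {G : SimpleGraph V} {v i j : V} {m : ℕ} :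
    (walkSubgraph G v m).Adj i j ↔
      G.Adj i j ∧ G.Reachable v i ∧ G.Reachable v j ∧
        G.dist v i + G.dist v j + 1 ≤ m := by
  classical
  constructor
  · rintro ⟨p, hl, he⟩
    have hadj := p.adj_of_mem_edges he
    have hi : G.Reachable v i := ⟨p.takeUntil i (p.fst_mem_support_of_mem_edges he)⟩
    have hj : G.Reachable v j := ⟨p.takeUntil j (p.snd_mem_support_of_mem_edges he)⟩
    refine ⟨hadj, hi, hj, ?_⟩
    have hc1 : G.dist j v = G.dist v j := G.dist_comm
    have hc2 : G.dist i v = G.dist v i := G.dist_comm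
    rcases edge_dist_bound p he with h1 | h1 <;> omega
  · rintro ⟨hadj, hi, hj, hle⟩
    obtain ⟨ri, hri⟩ := hi.exists_walk_length_eq_dist
    obtain ⟨rj, hrj⟩ := hj.exists_walk_length_eq_dist
    refine ⟨ri.append (Walk.cons hadj rj.reverse), ?_, ?_⟩
    · rw [Walk.length_append, Walk.length_cons, Walk.length_reverse, hri, hrj]; omega
    · rw [Walk.edges_append, List.mem_append, Walk.edges_cons]
      right; exact List.mem_cons_self

private lemma adj_dist_le {V : Type*} {G : SimpleGraph V} {v i j : V}
    (hadj : G.Adj i j) (hi : G.Reachable v i) : G.dist v j ≤ G.dist v i + 1 := by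
  obtain ⟨r, hr⟩ := hi.exists_walk_length_eq_dist
  have := G.dist_le (r.concat hadj)
  rwa [Walk.length_concat, hr] at this

/-- If a subgraph `H` of `G` is distance-determined from `v` and satisfies
`D_k(v) ≤ H ≤ L_k(v)`, then `H = D_k(v)` or `H = L_k(v)`. -/
theorem distanceDetermined_between_D_L
    {V : Type*} (G : SimpleGraph V) (v : V) (k : ℕ) (hk : 1 ≤ k)
    (H : G.Subgraph) (hdd : DistanceDetermined H v)
    (hD : walkSubgraph G v (2 * k) ≤ H) (hL : H ≤ walkSubgraph G v (2 * k + 1)) :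
    H = walkSubgraph G v (2 * k) ∨ H = walkSubgraph G v (2 * k + 1) := by
  obtain ⟨S, P, hPsymm, hvert, hedge⟩ := hdd
  -- the vertex sets of D and L coincide
  have hverts : ∀ u, u ∈ (walkSubgraph G v (2 * k + 1)).verts →
      u ∈ (walkSubgraph G v (2 * k)).verts := by
    intro u hu
    rw [mem_walkSubgraph_verts] at hu ⊢
    exact ⟨hu.1, by omega⟩
  by_cases hP : P k k
  · right
    have hLH : walkSubgraph G v (2 * k + 1) ≤ H := ⟨?_, ?_⟩
    exact le_antisymm hL hLH
    · intro u hu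
      exact hD.1 (hverts u hu)
    · intro i j hadj
      rw [walkSubgraph_adj] at hadj
      obtain ⟨hadj, hi, hj, hle⟩ := hadj
      by_cases hsum : G.dist v i + G.dist v j + 1 ≤ 2 * k
      · exact hD.2 ((walkSubgraph_adj).mpr ⟨hadj, hi, hj, hsum⟩)
      · have h1 : G.dist v j ≤ G.dist v i + 1 := adj_dist_le hadj hi
        have h2 : G.dist v i ≤ G.dist v j + 1 := adj_dist_le hadj.symm hj
        have hik : G.dist v i = k := by omega
        have hjk : G.dist v j = k := by omega
        exact (hedge i j hadj).mpr (by rw [hik, hjk]; exact hP)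
  · left
    have hHD : H ≤ walkSubgraph G v (2 * k) := ⟨?_, ?_⟩
    exact le_antisymm hHD hD
    · intro u hu
      exact hverts u (hL.1 hu)
    · intro i j hHadj
      have hadj : G.Adj i j := H.adj_sub hHadj
      have hLadj := hL.2 hHadj
      rw [walkSubgraph_adj] at hLadj
      obtain ⟨-, hi, hj, hle⟩ := hLadj
      rw [walkSubgraph_adj]
      refine ⟨hadj, hi, hj, ?_⟩
      by_contra hsum
      have h1 : G.dist v j ≤ G.dist v i + 1 := adj_dist_le hadj hi
      have h2 : G.dist v i ≤ G.dist v j + 1 := adj_dist_le hadj.symm hj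
      have hik : G.dist v i = k := by omega
      have hjk : G.dist v j = k := by omega
      have := (hedge i j hadj).mp hHadj
      rw [hik, hjk] at this
      exact hP this
end

section
/- Let n be a positive integer and let S and T be multisets of real numbers, each of cardinality n. If the power sums agree up to order n, i.e. for every i with 1 ≤ i ≤ n one has Σ_{x ∈ S} x^i = Σ_{x ∈ T} x^i (sums taken with multiplicity), then S = T as multisets. -/
open Polynomial

/-- If two multisets of real numbers, each of cardinality `n ≥ 1`, have equal power sums
of all orders `i` with `1 ≤ i ≤ n`, then they are equal as multisets. -/
theorem multiset_eq_of_power_sums_eq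
    (n : ℕ) (hn : 0 < n) (S T : Multiset ℝ)
    (hS : Multiset.card S = n) (hT : Multiset.card T = n)
    (hpow : ∀ i : ℕ, 1 ≤ i → i ≤ n → (S.map (· ^ i)).sum = (T.map (· ^ i)).sum) :
    S = T := by
  classical
  have exS : ∀ (U : Multiset ℝ), Multiset.card U = n → ∃ f : Fin n → ℝ,
      Finset.univ.val.map f = U := by
    intro U hU
    have hlen : U.toList.length = n := by rw [Multiset.length_toList, hU]
    refine ⟨fun i => U.toList.get (Fin.cast hlen.symm i), ?_⟩
    rw [Fin.univ_val_map]
    have hofn : List.ofFn (fun i : Fin n => U.toList.get (Fin.cast hlen.symm i))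
        = U.toList := by
      apply List.ext_get
      · simp [hlen]
      · intro i h1 h2
        simp
    rw [hofn, Multiset.coe_toList]
  obtain ⟨f, hf⟩ := exS S hS
  obtain ⟨g, hg⟩ := exS T hT
  have hps : ∀ (h : Fin n → ℝ) (U : Multiset ℝ), Finset.univ.val.map h = U →
      ∀ i : ℕ, MvPolynomial.aeval h (MvPolynomial.psum (Fin n) ℝ i)
        = (U.map (· ^ i)).sum := by
    intro h U hU i
    rw [MvPolynomial.psum, map_sum, ← hU, Multiset.map_map]
    simp only [map_pow, MvPolynomial.aeval_X]
    rfl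
  have hef : ∀ k : ℕ, MvPolynomial.aeval f (MvPolynomial.esymm (Fin n) ℝ k) = S.esymm k := by
    intro k; rw [MvPolynomial.aeval_esymm_eq_multiset_esymm, hf]
  have heg : ∀ k : ℕ, MvPolynomial.aeval g (MvPolynomial.esymm (Fin n) ℝ k) = T.esymm k := by
    intro k; rw [MvPolynomial.aeval_esymm_eq_multiset_esymm, hg]
  have key : ∀ k, k ≤ n → S.esymm k = T.esymm k := by
    intro k
    induction k using Nat.strong_induction_on with
    | _ k ih =>
      intro hk
      rcases Nat.eq_zero_or_pos k with rfl | hkpos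
      · simp [Multiset.esymm]
      · have h1 := congrArg (MvPolynomial.aeval f) (MvPolynomial.mul_esymm_eq_sum (Fin n) ℝ k)
        have h2 := congrArg (MvPolynomial.aeval g) (MvPolynomial.mul_esymm_eq_sum (Fin n) ℝ k)
        simp only [map_mul, map_sum, map_pow, map_neg, map_one, map_natCast] at h1 h2
        rw [hef] at h1
        rw [heg] at h2
        have hsum : (∑ a ∈ Finset.filter (fun a => a.1 < k) (Finset.HasAntidiagonal.antidiagonal k),
              (-1 : ℝ) ^ a.1 * MvPolynomial.aeval f (MvPolynomial.esymm (Fin n) ℝ a.1) *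
                MvPolynomial.aeval f (MvPolynomial.psum (Fin n) ℝ a.2))
            = (∑ a ∈ Finset.filter (fun a => a.1 < k) (Finset.HasAntidiagonal.antidiagonal k),
              (-1 : ℝ) ^ a.1 * MvPolynomial.aeval g (MvPolynomial.esymm (Fin n) ℝ a.1) *
                MvPolynomial.aeval g (MvPolynomial.psum (Fin n) ℝ a.2)) := by
          apply Finset.sum_congr rfl
          intro a ha
          simp only [Finset.mem_filter, Finset.HasAntidiagonal.mem_antidiagonal] at ha
          obtain ⟨hab, halt⟩ := ha
          have h2pos : 1 ≤ a.2 := by omega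
          have h2le : a.2 ≤ n := by omega
          rw [hef, heg, hps f S hf, hps g T hg, hpow a.2 h2pos h2le,
            ih a.1 halt (by omega)]
        rw [hsum, ← h2] at h1
        have hkne : (k : ℝ) ≠ 0 := Nat.cast_ne_zero.mpr (by omega)
        exact mul_left_cancel₀ hkne h1
  have hpoly : (S.map fun r => X - C r).prod = (T.map fun r => X - C r).prod := by
    ext k
    by_cases hk : k ≤ n
    · rw [Multiset.prod_X_sub_C_coeff S (le_trans hk hS.ge),
        Multiset.prod_X_sub_C_coeff T (le_trans hk hT.ge), hS, hT,
        key _ (Nat.sub_le _ _)]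
    · rw [coeff_eq_zero_of_natDegree_lt, coeff_eq_zero_of_natDegree_lt] <;>
        rw [natDegree_multiset_prod_X_sub_C_eq_card] <;> omega
  have hroots := congrArg Polynomial.roots hpoly
  rwa [Polynomial.roots_multiset_prod_X_sub_C, Polynomial.roots_multiset_prod_X_sub_C] at hroots
end
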